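/- For every finite simple graph G = (V, E) of maximum degree at most Δ and every positive integer p, the vertex set V can be partitioned into p color classes V^1, …, V^p such that every vertex has at most ⌊Δ/p⌋ neighbors lying in its own color class (i.e., G admits a defective (p, ⌊Δ/p⌋)-coloring). -/

import Mathlib

open SimpleGraph

/-- `G` contains a path of order `k` (i.e., with `k` vertices). -/
def HasPathOfOrder {V : Type*} (G : SimpleGraph V) (k : ℕ) : Prop :=
  ∃ (u v : V) (w : G.Walk u v), w.IsPath ∧ w.length + 1 = k

/-- `F` is a `k`-path vertex cover of `G`: the subgraph induced on the
complement of `F` contains no path of order `k`. -/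
def IsPathVertexCover {V : Type*} (G : SimpleGraph V) (k : ℕ) (F : Finset V) : Prop :=
  ¬ HasPathOfOrder (G.induce ((↑F : Set V)ᶜ)) k

/-- `psi G k` is the minimum cardinality of a `k`-path vertex cover of `G`. -/
noncomputable def psi {V : Type*} [Fintype V] (G : SimpleGraph V) (k : ℕ) : ℕ :=
  sInf {n | ∃ F : Finset V, IsPathVertexCover G k F ∧ F.card = n}

/-- Any graph of maximum degree at most `Δ` admits a defective
`(p, ⌊Δ/p⌋)`-coloring: a coloring with `p` colors such that every vertex has
at most `⌊Δ/p⌋` neighbors of its own color. -/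
theorem stmt_0 {V : Type*} [Fintype V] (G : SimpleGraph V) [DecidableRel G.Adj]
    (Δ p : ℕ) (hp : 0 < p) (hΔ : ∀ v, G.degree v ≤ Δ) :
    ∃ c : V → Fin p,
      ∀ v, ((G.neighborFinset v).filter (fun w => c w = c v)).card ≤ Δ / p := by
  classical
  set f : (V → Fin p) → ℕ :=
    fun c => ∑ u, ((G.neighborFinset u).filter (fun w => c w = c u)).card with hf
  have hS : {n | ∃ c : V → Fin p, f c = n}.Nonempty := ⟨_, fun _ => ⟨0, hp⟩, rfl⟩
  obtain ⟨c, hc⟩ := Nat.sInf_mem hS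
  refine ⟨c, fun v => ?_⟩
  by_contra hv
  push_neg at hv
  set a := ((G.neighborFinset v).filter (fun w => c w = c v)).card with ha
  -- there is a color i with few neighbors of v
  have hexi : ∃ i : Fin p, ((G.neighborFinset v).filter (fun w => c w = i)).card ≤ Δ / p := by
    by_contra h
    push_neg at h
    have h1 : G.degree v = ∑ j : Fin p, ((G.neighborFinset v).filter (fun w => c w = j)).card :=
      Finset.card_eq_sum_card_fiberwise (fun x _ => Finset.mem_univ (c x))
    have h2 : p * (Δ / p + 1) ≤ ∑ j : Fin p, ((G.neighborFinset v).filter (fun w => c w = j)).card := by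
      calc p * (Δ / p + 1) = ∑ _j : Fin p, (Δ / p + 1) := by
              simp [Finset.sum_const, mul_comm]
        _ ≤ _ := Finset.sum_le_sum (fun j _ => h j)
    have h3 : p * (Δ / p) + Δ % p = Δ := Nat.div_add_mod Δ p
    have h4 : Δ % p < p := Nat.mod_lt Δ hp
    have h5 : p * (Δ / p + 1) = p * (Δ / p) + p := by ring
    have := hΔ v
    omega
  obtain ⟨i, hb⟩ := hexi
  set b := ((G.neighborFinset v).filter (fun w => c w = i)).card with hbdef
  set c' : V → Fin p := Function.update c v i with hc'
  -- c' agrees with c off v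
  have hcc' : ∀ u, u ≠ v → c' u = c u := fun u hu => Function.update_of_ne hu _ _
  have hc'v : c' v = i := Function.update_self _ _ _
  -- per vertex terms
  set T : (V → Fin p) → V → ℕ :=
    fun d u => ((G.neighborFinset u).filter (fun w => d w = d u)).card with hT
  -- non-neighbors ≠ v unchanged
  have hsame : ∀ u ∈ (Finset.univ.erase v) \ G.neighborFinset v, T c' u = T c u := by
    intro u hu
    simp only [Finset.mem_sdiff, Finset.mem_erase] at hu
    obtain ⟨⟨huv, -⟩, hun⟩ := hu
    have hvn : v ∉ G.neighborFinset u := by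
      rw [mem_neighborFinset] at hun ⊢
      intro h; exact hun h.symm
    simp only [hT]
    apply congrArg
    apply Finset.filter_congr
    intro w hw
    have hwv : w ≠ v := by rintro rfl; exact hvn hw
    rw [hcc' w hwv, hcc' u huv]
  -- neighbors: change identity
  have hnb : ∀ u ∈ G.neighborFinset v,
      T c' u + (if c v = c u then 1 else 0) = T c u + (if i = c u then 1 else 0) := by
    intro u hu
    have huv : u ≠ v := by
      rw [mem_neighborFinset] at hu
      exact fun h => G.loopless.irrefl v (h ▸ hu)
    have hvmem : v ∈ G.neighborFinset u := by
      rw [mem_neighborFinset] at hu ⊢; exact hu.symm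
    simp only [hT, Finset.card_filter]
    rw [← Finset.sum_erase_add _ _ hvmem, ← Finset.sum_erase_add _ _ hvmem]
    have herase : ∑ w ∈ (G.neighborFinset u).erase v, (if c' w = c' u then 1 else 0)
        = ∑ w ∈ (G.neighborFinset u).erase v, (if c w = c u then 1 else 0) := by
      apply Finset.sum_congr rfl
      intro w hw
      rw [hcc' w (Finset.ne_of_mem_erase hw), hcc' u huv]
    rw [herase, hc'v, hcc' u huv]
    omega
  -- boundary sums
  have hsa : ∑ u ∈ G.neighborFinset v, (if c v = c u then 1 else 0) = a := by
    rw [ha, Finset.card_filter]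
    apply Finset.sum_congr rfl
    intro w _
    simp [eq_comm]
  have hsb : ∑ u ∈ G.neighborFinset v, (if i = c u then 1 else 0) = b := by
    rw [hbdef, Finset.card_filter]
    apply Finset.sum_congr rfl
    intro w _
    simp [eq_comm]
  have hNsum : ∑ u ∈ G.neighborFinset v, T c' u + a = ∑ u ∈ G.neighborFinset v, T c u + b := by
    rw [← hsa, ← hsb, ← Finset.sum_add_distrib, ← Finset.sum_add_distrib]
    exact Finset.sum_congr rfl hnb
  -- T at v
  have hTv : T c' v = b := by
    simp only [hT, hbdef]
    apply congrArg
    apply Finset.filter_congr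
    intro w hw
    have hwv : w ≠ v := by
      rw [mem_neighborFinset] at hw
      exact fun h => G.loopless.irrefl v (h ▸ hw)
    rw [hcc' w hwv, hc'v]
  have hTcv : T c v = a := rfl
  -- decompose f
  have hNsub : G.neighborFinset v ⊆ Finset.univ.erase v := by
    intro u hu
    rw [Finset.mem_erase]
    rw [mem_neighborFinset] at hu
    exact ⟨fun h => G.loopless.irrefl v (h ▸ hu), Finset.mem_univ u⟩
  have hdec : ∀ d : V → Fin p, f d =
      (∑ u ∈ (Finset.univ.erase v) \ G.neighborFinset v, T d u
        + ∑ u ∈ G.neighborFinset v, T d u) + T d v := by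
    intro d
    rw [hf]
    rw [Finset.sum_sdiff hNsub]
    rw [Finset.sum_erase_add _ _ (Finset.mem_univ v)]
  have hRsame : ∑ u ∈ (Finset.univ.erase v) \ G.neighborFinset v, T c' u
      = ∑ u ∈ (Finset.univ.erase v) \ G.neighborFinset v, T c u :=
    Finset.sum_congr rfl hsame
  have hkey : f c' + 2 * a = f c + 2 * b := by
    rw [hdec c', hdec c, hRsame, hTv, hTcv]
    omega
  have hle : sInf {n | ∃ c : V → Fin p, f c = n} ≤ f c' := Nat.sInf_le ⟨c', rfl⟩
  have hab : b < a := lt_of_le_of_lt hb hv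
  omega
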